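/- arXiv:1407.4539 — 2 statements merged into one kernel-verified Lean document; each statement's English description precedes it below -/
import Mathlib

section
/- For η > ε > 0, (2/θ) ∫_ε^η (r - ε) c(r) dr = (1/(β²θ²))[Li₂(1 - e^{-2βθη}) - Li₂(1 - e^{-2βθε})] + (2ε/(βθ)) log((1 - e^{-2βθε})/(1 - e^{-2βθη})), where Li₂(t) = -∫₀ᵗ log(1-x)/x dx is the dilogarithm and c(r) = 2θ/(e^{2βθr} - 1). -/
open Real MeasureTheory

lemma dilog_integrand_intervalIntegrable {t : ℝ} (ht0 : 0 < t) (ht1 : t < 1) :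
    IntervalIntegrable (fun x => Real.log (1 - x) / x) volume 0 t := by
  have hmeas : Measurable fun x : ℝ => Real.log (1 - x) / x :=
    (Real.measurable_log.comp (measurable_const.sub measurable_id)).div measurable_id
  rw [intervalIntegrable_iff_integrableOn_Icc_of_le ht0.le]
  apply Measure.integrableOn_of_bounded (M := (1 - t)⁻¹) (by simp) hmeas.aestronglyMeasurable
  rw [ae_restrict_iff' measurableSet_Icc]
  filter_upwards with x hx
  rcases eq_or_lt_of_le hx.1 with h0 | h0
  · rw [← h0]
    have h1t : (0:ℝ) ≤ (1 - t)⁻¹ := by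
      rw [inv_nonneg]; linarith
    simpa using h1t
  · have hx1 : x < 1 := lt_of_le_of_lt hx.2 ht1
    have h1x : 0 < 1 - x := by linarith
    have hlog_le : Real.log (1 - x) ≤ 0 := Real.log_nonpos (by linarith) (by linarith)
    have hbound : -Real.log (1 - x) ≤ x / (1 - x) := by
      have h := Real.log_le_sub_one_of_pos (x := (1 - x)⁻¹) (by positivity)
      rw [Real.log_inv] at h
      calc -Real.log (1 - x) ≤ (1 - x)⁻¹ - 1 := h
        _ = x / (1 - x) := by field_simp; ring
    rw [Real.norm_eq_abs, abs_div, abs_of_nonpos hlog_le, abs_of_pos h0, div_le_iff₀ h0]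
    calc -Real.log (1 - x) ≤ x / (1 - x) := hbound
      _ ≤ x * (1 - t)⁻¹ := by
          rw [div_eq_mul_inv]
          gcongr
          exact hx.2
      _ = (1 - t)⁻¹ * x := by ring

lemma dilog_hasDerivAt {Li2 : ℝ → ℝ}
    (hLi2 : ∀ t, Li2 t = -∫ x in (0 : ℝ)..t, Real.log (1 - x) / x)
    {t : ℝ} (ht0 : 0 < t) (ht1 : t < 1) :
    HasDerivAt Li2 (-(Real.log (1 - t) / t)) t := by
  have hfun : Li2 = fun t => -∫ x in (0 : ℝ)..t, Real.log (1 - x) / x := funext hLi2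
  rw [hfun]
  have hmeas : Measurable fun x : ℝ => Real.log (1 - x) / x :=
    (Real.measurable_log.comp (measurable_const.sub measurable_id)).div measurable_id
  have hcont : ContinuousAt (fun x : ℝ => Real.log (1 - x) / x) t := by
    apply ContinuousAt.div
    · exact (Real.continuousAt_log (by linarith)).comp (by fun_prop)
    · fun_prop
    · exact ne_of_gt ht0
  exact (intervalIntegral.integral_hasDerivAt_right
    (dilog_integrand_intervalIntegrable ht0 ht1)
    hmeas.aestronglyMeasurable.stronglyMeasurableAtFilter hcont).neg

theorem dilog_integral_identity (β θ : ℝ) (hβ : 0 < β) (hθ : 0 < θ)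
    (c : ℝ → ℝ) (hc : ∀ s, c s = 2 * θ / (exp (2 * β * θ * s) - 1))
    (Li2 : ℝ → ℝ) (hLi2 : ∀ t, Li2 t = -∫ x in (0 : ℝ)..t, Real.log (1 - x) / x)
    (ε η : ℝ) (hε : 0 < ε) (hεη : ε < η) :
    (2 / θ) * ∫ r in ε..η, (r - ε) * c r
      = (1 / (β ^ 2 * θ ^ 2)) *
          (Li2 (1 - exp (-(2 * β * θ * η))) - Li2 (1 - exp (-(2 * β * θ * ε))))
        + (2 * ε / (β * θ)) *
          Real.log ((1 - exp (-(2 * β * θ * ε))) / (1 - exp (-(2 * β * θ * η)))) := by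
  have hβθ : 0 < β * θ := mul_pos hβ hθ
  set F : ℝ → ℝ := fun r => (θ/2) * ((1/(β^2*θ^2)) * Li2 (1 - exp (-(2*β*θ*r)))
      - (2*ε/(β*θ)) * Real.log (1 - exp (-(2*β*θ*r)))) with hF
  -- basic facts about the exponential at points > 0
  have key : ∀ x : ℝ, 0 < x → exp (-(2*β*θ*x)) < 1 := by
    intro x hx
    have : exp (-(2*β*θ*x)) < exp 0 := Real.exp_lt_exp.mpr (by nlinarith)
    simpa using this
  have hderiv : ∀ x ∈ Set.uIcc ε η, HasDerivAt F ((x - ε) * c x) x := by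
    intro x hx
    rw [Set.uIcc_of_le hεη.le] at hx
    have hx0 : 0 < x := lt_of_lt_of_le hε hx.1
    have he : 0 < exp (-(2*β*θ*x)) := Real.exp_pos _
    have hel : exp (-(2*β*θ*x)) < 1 := key x hx0
    have hg0 : 0 < 1 - exp (-(2*β*θ*x)) := by linarith
    have hg1 : 1 - exp (-(2*β*θ*x)) < 1 := by linarith
    -- derivative of the inner function g r = 1 - exp(-(2βθ r))
    have h1 : HasDerivAt (fun r : ℝ => -(2*β*θ*r)) (-(2*β*θ)) x := by
      exact (((hasDerivAt_id x).const_mul (2*β*θ)).neg).congr_deriv (by ring)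
    have h2 := h1.exp
    have hgd : HasDerivAt (fun r : ℝ => 1 - exp (-(2*β*θ*r)))
        (2*β*θ * exp (-(2*β*θ*x))) x := by
      have h3 := h2.const_sub 1
      exact h3.congr_deriv (by ring)
    have hLi2d := dilog_hasDerivAt hLi2 hg0 hg1
    have hcomp : HasDerivAt (fun r : ℝ => Li2 (1 - exp (-(2*β*θ*r))))
        (-(Real.log (1 - (1 - exp (-(2*β*θ*x)))) / (1 - exp (-(2*β*θ*x))))
          * (2*β*θ * exp (-(2*β*θ*x)))) x := hLi2d.comp x hgd
    have hlogd : HasDerivAt (fun r : ℝ => Real.log (1 - exp (-(2*β*θ*r))))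
        ((1 - exp (-(2*β*θ*x)))⁻¹ * (2*β*θ * exp (-(2*β*θ*x)))) x :=
      by have := (Real.hasDerivAt_log (ne_of_gt hg0)).comp x hgd; exact this
    have hFd := ((hcomp.const_mul (1/(β^2*θ^2))).sub
        (hlogd.const_mul (2*ε/(β*θ)))).const_mul (θ/2)
    refine hFd.congr_deriv ?_
    symm
    rw [hc x]
    have hsimp : 1 - (1 - exp (-(2*β*θ*x))) = exp (-(2*β*θ*x)) := by ring
    rw [hsimp, Real.log_exp]
    have hE : 1 < exp (2*β*θ*x) := by
      have : exp 0 < exp (2*β*θ*x) := Real.exp_lt_exp.mpr (by nlinarith)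
      simpa using this
    have hEne : exp (2*β*θ*x) - 1 ≠ 0 := by linarith
    rw [Real.exp_neg] at hg0 ⊢
    have hexp_ne : exp (2*β*θ*x) ≠ 0 := (Real.exp_pos _).ne'
    field_simp
  have hInt : IntervalIntegrable (fun r => (r - ε) * c r) volume ε η := by
    apply ContinuousOn.intervalIntegrable
    have hcfun : Set.EqOn (fun r => (r - ε) * c r)
        (fun r => (r - ε) * (2 * θ / (exp (2 * β * θ * r) - 1))) (Set.uIcc ε η) := by
      intro r _; simp [hc r]
    apply ContinuousOn.congr _ hcfun
    apply ContinuousOn.mul (by fun_prop)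
    apply ContinuousOn.div (by fun_prop) (by fun_prop)
    intro r hr
    rw [Set.uIcc_of_le hεη.le] at hr
    have hr0 : 0 < r := lt_of_lt_of_le hε hr.1
    have : 1 < exp (2*β*θ*r) := by
      have : exp 0 < exp (2*β*θ*r) := Real.exp_lt_exp.mpr (by nlinarith)
      simpa using this
    intro h; rw [sub_eq_zero] at h; rw [← h] at this; exact lt_irrefl _ this
  rw [intervalIntegral.integral_eq_sub_of_hasDerivAt hderiv hInt]
  have hA : 0 < 1 - exp (-(2*β*θ*ε)) := by linarith [key ε hε]
  have hB : 0 < 1 - exp (-(2*β*θ*η)) := by linarith [key η (hε.trans hεη)]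
  rw [Real.log_div (ne_of_gt hA) (ne_of_gt hB), hF]
  field_simp
  ring
end

section
/- Let δ₁ = (1 - e^{-λ})c(r) + e^{-λ}c(r+s) and γ₁(q) = (1 - e^{-λ})c(r) + e^{-λ}c(q - s) for q ∈ (s+r, ∞). Then for q in this range, ∂_q γ₁(q) · (γ₁(q) - u(γ₁(q), s))/ψ(γ₁(q)) + c(q - s) = u(δ₁, q - s - r), where ψ(x) = βx² + 2βθx. -/
set_option maxHeartbeats 1000000

open Real

private lemma aux_frac (β θ S x : ℝ) (hβ : 0 < β) (hθ : 0 < θ) (hx : 0 < x)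
    (hS : 1 < S) :
    (x - 2 * θ * x / ((2 * θ + x) * S - x)) / (β * x ^ 2 + 2 * β * θ * x)
      = (S - 1) / (β * ((2 * θ + x) * S - x)) := by
  have hD : 0 < (2 * θ + x) * S - x := by
    nlinarith [mul_pos hx (show (0:ℝ) < S - 1 by linarith),
      mul_pos hθ (show (0:ℝ) < S by linarith)]
  have hψ : 0 < β * x ^ 2 + 2 * β * θ * x := by positivity
  field_simp
  ring

theorem deriv_gamma_identity (β θ lam s r : ℝ) (hβ : 0 < β) (hθ : 0 < θ)
    (hlam : 0 ≤ lam) (hs : 0 < s) (hr : 0 < r)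
    (ψ : ℝ → ℝ) (hψ : ∀ x, ψ x = β * x ^ 2 + 2 * β * θ * x)
    (c : ℝ → ℝ) (hc : ∀ t, c t = 2 * θ / (exp (2 * β * θ * t) - 1))
    (u : ℝ → ℝ → ℝ)
    (hu : ∀ lam t, u lam t = 2 * θ * lam / ((2 * θ + lam) * exp (2 * β * θ * t) - lam))
    (δ₁ : ℝ) (hδ₁ : δ₁ = (1 - exp (-lam)) * c r + exp (-lam) * c (r + s))
    (γ₁ : ℝ → ℝ) (hγ₁ : ∀ q, γ₁ q = (1 - exp (-lam)) * c r + exp (-lam) * c (q - s)) :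
    ∀ q : ℝ, s + r < q →
      deriv γ₁ q * (γ₁ q - u (γ₁ q) s) / ψ (γ₁ q) + c (q - s) = u δ₁ (q - s - r) := by
  intro q hq
  have ha : 0 < 2 * β * θ := by positivity
  have hE : 1 < exp (2 * β * θ * (q - s - r)) := by
    rw [show (1:ℝ) = exp 0 by simp]
    exact exp_lt_exp.mpr (by nlinarith)
  have hR : 1 < exp (2 * β * θ * r) := by
    rw [show (1:ℝ) = exp 0 by simp]
    exact exp_lt_exp.mpr (by nlinarith)
  have hS : 1 < exp (2 * β * θ * s) := by
    rw [show (1:ℝ) = exp 0 by simp]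
    exact exp_lt_exp.mpr (by nlinarith)
  have hL0 : 0 < exp (-lam) := exp_pos _
  have hL1 : exp (-lam) ≤ 1 := exp_le_one_iff.mpr (by linarith)
  set E := exp (2 * β * θ * (q - s - r)) with hEdef
  set R := exp (2 * β * θ * r) with hRdef
  set S := exp (2 * β * θ * s) with hSdef
  set L := exp (-lam) with hLdef
  have hER : exp (2 * β * θ * (q - s)) = E * R := by
    rw [hEdef, hRdef, ← exp_add]; congr 1; ring
  have hRS : exp (2 * β * θ * (r + s)) = R * S := by
    rw [hRdef, hSdef, ← exp_add]; congr 1; ring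
  have hER1 : 1 < E * R := by nlinarith
  have hRS1 : 1 < R * S := by nlinarith
  -- compute the derivative of γ₁
  have hne : exp (2 * β * θ * (q - s)) - 1 ≠ 0 := by rw [hER]; nlinarith
  have hγeq : γ₁ = fun q : ℝ =>
      (1 - L) * c r + L * (2 * θ * (exp (2 * β * θ * (q - s)) - 1)⁻¹) := by
    funext y; simp only [hγ₁, hc]; ring
  have h1 : HasDerivAt (fun q : ℝ => 2 * β * θ * (q - s)) (2 * β * θ) q := by
    simpa using ((hasDerivAt_id q).sub_const s).const_mul (2 * β * θ)
  have h2 : HasDerivAt (fun q : ℝ => exp (2 * β * θ * (q - s)))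
      (exp (2 * β * θ * (q - s)) * (2 * β * θ)) q := h1.exp
  have h3 := ((h2.sub_const 1).inv hne).const_mul (2 * θ)
  have h4 := (h3.const_mul L).const_add ((1 - L) * c r)
  have hderiv : deriv γ₁ q =
      L * (2 * θ * (-(exp (2 * β * θ * (q - s)) * (2 * β * θ)) /
        (exp (2 * β * θ * (q - s)) - 1) ^ 2)) := by
    rw [hγeq]
    exact h4.deriv
  rw [hderiv]
  simp only [hγ₁, hδ₁, hu, hψ, hc, hER, hRS]
  -- positivity facts
  have hx : 0 < ((1 - L) * (2 * θ / (R - 1)) + L * (2 * θ / (E * R - 1))) := by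
    have h1 : 0 ≤ (1 - L) * (2 * θ / (R - 1)) := by
      apply mul_nonneg (by linarith)
      apply div_nonneg (by positivity) (by linarith)
    have h2 : 0 < L * (2 * θ / (E * R - 1)) := by
      apply mul_pos hL0
      apply div_pos (by positivity) (by linarith)
    linarith
  have hd : 0 < ((1 - L) * (2 * θ / (R - 1)) + L * (2 * θ / (R * S - 1))) := by
    have h1 : 0 ≤ (1 - L) * (2 * θ / (R - 1)) := by
      apply mul_nonneg (by linarith)
      apply div_nonneg (by positivity) (by linarith)
    have h2 : 0 < L * (2 * θ / (R * S - 1)) := by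
      apply mul_pos hL0
      apply div_pos (by positivity) (by linarith)
    linarith
  have hR1 : R - 1 ≠ 0 := by linarith
  have hS1 : S - 1 ≠ 0 := by linarith
  have hER1' : E * R - 1 ≠ 0 := by linarith
  have hRS1' : R * S - 1 ≠ 0 := by linarith
  -- key intermediate quantities M and P
  have hM : (0:ℝ) < (R * S - 1) - L * R * (S - 1) := by
    have h1 : 0 ≤ (1 - L) * (R * (S - 1)) :=
      mul_nonneg (by linarith) (by nlinarith)
    nlinarith
  have hP : (0:ℝ) < S * (R - 1) * (E * R - 1)
      + (S - 1) * ((1 - L) * (E * R - 1) + L * (R - 1)) := by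
    have h1 : 0 < S * (R - 1) * (E * R - 1) := by
      apply mul_pos (mul_pos (by linarith) (by linarith)) (by linarith)
    have h2 : 0 ≤ (1 - L) * (E * R - 1) := mul_nonneg (by linarith) (by linarith)
    have h3 : 0 < L * (R - 1) := mul_pos hL0 (by linarith)
    nlinarith [mul_pos (show (0:ℝ) < S - 1 by linarith)
      (show (0:ℝ) < (1 - L) * (E * R - 1) + L * (R - 1) by linarith)]
  have hDd : 0 < (2 * θ + ((1 - L) * (2 * θ / (R - 1)) + L * (2 * θ / (R * S - 1)))) * E - ((1 - L) * (2 * θ / (R - 1)) + L * (2 * θ / (R * S - 1))) := by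
    nlinarith [mul_pos hd (show (0:ℝ) < E - 1 by linarith),
      mul_pos hθ (show (0:ℝ) < E by linarith)]
  have hDx : 0 < (2 * θ + ((1 - L) * (2 * θ / (R - 1)) + L * (2 * θ / (E * R - 1)))) * S - ((1 - L) * (2 * θ / (R - 1)) + L * (2 * θ / (E * R - 1))) := by
    nlinarith [mul_pos hx (show (0:ℝ) < S - 1 by linarith),
      mul_pos hθ (show (0:ℝ) < S by linarith)]
  have hcomb : β * ((2 * θ + ((1 - L) * (2 * θ / (R - 1)) + L * (2 * θ / (E * R - 1)))) * S - ((1 - L) * (2 * θ / (R - 1)) + L * (2 * θ / (E * R - 1))))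
      = β * (2 * θ) * (S * (R - 1) * (E * R - 1)
          + (S - 1) * ((1 - L) * (E * R - 1) + L * (R - 1))) / ((R - 1) * (E * R - 1)) := by
    have : R * E - 1 ≠ 0 := by rwa [mul_comm]
    field_simp
    ring
  rw [mul_div_assoc, aux_frac β θ S _ hβ hθ hx hS, hcomb, div_div_eq_mul_div]
  have hLHS : L * (2 * θ * (-(E * R * (2 * β * θ)) / (E * R - 1) ^ 2)) *
        ((S - 1) * ((R - 1) * (E * R - 1)) / (β * (2 * θ) * (S * (R - 1) * (E * R - 1)
          + (S - 1) * ((1 - L) * (E * R - 1) + L * (R - 1))))) + 2 * θ / (E * R - 1)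
      = 2 * θ * ((R * S - 1) - L * R * (S - 1)) /
        (S * (R - 1) * (E * R - 1) + (S - 1) * ((1 - L) * (E * R - 1) + L * (R - 1))) := by
    have : R * E - 1 ≠ 0 := by rwa [mul_comm]
    obtain ⟨P, hPdef⟩ : ∃ P, S * (R - 1) * (E * R - 1) + (S - 1) * ((1 - L) * (E * R - 1) + L * (R - 1)) = P := ⟨_, rfl⟩
    have hP' : P ≠ 0 := hPdef ▸ hP.ne'
    rw [hPdef]
    field_simp
    rw [← hPdef]
    ring
  have hRHS : 2 * θ * ((1 - L) * (2 * θ / (R - 1)) + L * (2 * θ / (R * S - 1))) / ((2 * θ + ((1 - L) * (2 * θ / (R - 1)) + L * (2 * θ / (R * S - 1)))) * E - ((1 - L) * (2 * θ / (R - 1)) + L * (2 * θ / (R * S - 1))))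
      = 2 * θ * ((R * S - 1) - L * R * (S - 1)) /
        (S * (R - 1) * (E * R - 1) + (S - 1) * ((1 - L) * (E * R - 1) + L * (R - 1))) := by
    rw [div_eq_div_iff hDd.ne' hP.ne']
    field_simp [hθ.ne', hR1, hS1, hRS1']
    ring
  rw [hRHS, ← hLHS]
end
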